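/- Let q : ℝ → ℝ be twice differentiable with q''(t) = 2 q(t)^3 + t q(t), and set P(t) = 2 q(t)^2 + 2 q'(t) + t. Then 2 P(t) P''(t) - (P'(t))^2 = 2 P(t)^2 (P(t) - t) - 1 for all t. -/
import Mathlib


/-- If `q` solves `q'' = 2q³ + tq` and `P = 2q² + 2q' + t`, then
`2PP'' - (P')² = 2P²(P - t) - 1`. -/
theorem stmt_2 (q q' q'' : ℝ → ℝ)
    (hq : ∀ t, HasDerivAt q (q' t) t)
    (hq' : ∀ t, HasDerivAt q' (q'' t) t)
    (hPII : ∀ t, q'' t = 2 * q t ^ 3 + t * q t) :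
    ∀ t, 2 * (2 * q t ^ 2 + 2 * q' t + t) *
        deriv (deriv (fun s => 2 * q s ^ 2 + 2 * q' s + s)) t
      - (deriv (fun s => 2 * q s ^ 2 + 2 * q' s + s) t) ^ 2
      = 2 * (2 * q t ^ 2 + 2 * q' t + t) ^ 2 * ((2 * q t ^ 2 + 2 * q' t + t) - t) - 1 := by
  intro t
  have hq3 : ∀ s, HasDerivAt q'' (6 * q s ^ 2 * q' s + q s + s * q' s) s := by
    intro s
    have : HasDerivAt (fun u => 2 * q u ^ 3 + u * q u)
        (2 * (3 * q s ^ 2 * q' s) + (1 * q s + s * q' s)) s := by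
      exact (((hq s).pow 3).const_mul 2).add ((hasDerivAt_id s).mul (hq s))
    have h2 : q'' = fun u => 2 * q u ^ 3 + u * q u := funext hPII
    rw [h2]
    convert this using 1
    ring
  have hP : ∀ s, HasDerivAt (fun u => 2 * q u ^ 2 + 2 * q' u + u)
      (4 * q s * q' s + 2 * q'' s + 1) s := by
    intro s
    have : HasDerivAt (fun u => 2 * q u ^ 2 + 2 * q' u + u)
        (2 * (2 * q s ^ 1 * q' s) + 2 * q'' s + 1) s :=
      ((((hq s).pow 2).const_mul 2).add ((hq' s).const_mul 2)).add (hasDerivAt_id s)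
    convert this using 1
    ring
  have hdP : deriv (fun u => 2 * q u ^ 2 + 2 * q' u + u)
      = fun s => 4 * q s * q' s + 2 * q'' s + 1 := funext fun s => (hP s).deriv
  have hP2 : HasDerivAt (fun s => 4 * q s * q' s + 2 * q'' s + 1)
      (4 * q' t ^ 2 + 4 * q t * q'' t + 2 * (6 * q t ^ 2 * q' t + q t + t * q' t)) t := by
    have : HasDerivAt (fun s => 4 * q s * q' s + 2 * q'' s + 1)
        ((4 * q' t) * q' t + (4 * q t) * q'' t + 2 * (6 * q t ^ 2 * q' t + q t + t * q' t) + 0) t :=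
      ((((hq t).const_mul 4).mul (hq' t)).add ((hq3 t).const_mul 2)).add (hasDerivAt_const t 1)
    convert this using 1
    ring
  have hdd : deriv (deriv (fun u => 2 * q u ^ 2 + 2 * q' u + u)) t
      = 4 * q' t ^ 2 + 4 * q t * q'' t + 2 * (6 * q t ^ 2 * q' t + q t + t * q' t) := by
    rw [hdP]; exact hP2.deriv
  rw [hdd, (hP t).deriv, hPII t]
  ring
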